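/- Let κ > 0, λ > 0 and let n ≥ 1 be an integer. If u is an S⁺ₙ-solution of problem (P) for parameters (κ, λ), then λ < n²π². -/

import Mathlib

open Set Real Filter

noncomputable section

set_option maxHeartbeats 1000000

/-- `u` is twice continuously differentiable on `[a,b]`, satisfies
`1 + κ (u')² > 0` and the ODE `-u'' = λ u (1 + κ (u')²)^(3/2)` on `[a,b]`. -/
def SolODE (κ lam : ℝ) (u : ℝ → ℝ) (a b : ℝ) : Prop :=
  (∀ x ∈ Set.Icc a b, DifferentiableAt ℝ u x) ∧
  (∀ x ∈ Set.Icc a b, DifferentiableAt ℝ (deriv u) x) ∧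
  ContinuousOn (deriv (deriv u)) (Set.Icc a b) ∧
  (∀ x ∈ Set.Icc a b, 0 < 1 + κ * (deriv u x) ^ 2) ∧
  (∀ x ∈ Set.Icc a b,
    -(deriv (deriv u) x) = lam * u x * (1 + κ * (deriv u x) ^ 2) ^ ((3 : ℝ) / 2))

/-- `u` is a solution of problem (P) on `[0,1]` with Dirichlet boundary conditions. -/
def SolP (κ lam : ℝ) (u : ℝ → ℝ) : Prop :=
  SolODE κ lam u 0 1 ∧ u 0 = 0 ∧ u 1 = 0

/-- `u` is an `S⁺ₙ`-solution of problem (P): a nontrivial solution with exactly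
`n - 1` zeros in `(0,1)`, all zeros in `[0,1]` simple, and positive near `0`. -/
def SPlus (κ lam : ℝ) (n : ℕ) (u : ℝ → ℝ) : Prop :=
  SolP κ lam u ∧
  (∃ x ∈ Set.Icc (0 : ℝ) 1, u x ≠ 0) ∧
  {x ∈ Set.Ioo (0 : ℝ) 1 | u x = 0}.ncard = n - 1 ∧
  (∀ τ ∈ Set.Icc (0 : ℝ) 1, u τ = 0 → deriv u τ ≠ 0) ∧
  (∃ δ > 0, ∀ x ∈ Set.Ioo (0 : ℝ) δ, 0 < u x)

/-- The constant `B = ∫₀¹ dθ/√(θ⁻⁴ - 1)`. -/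
def Bconst : ℝ := ∫ θ in (0 : ℝ)..1, 1 / Real.sqrt ((θ ^ 4)⁻¹ - 1)

/-- The sup-norm of `u` over `[0,1]`. -/
def supNorm (u : ℝ → ℝ) : ℝ := sSup ((fun x => |u x|) '' Set.Icc (0 : ℝ) 1)

/-- The time map `J(λ, ξ) = √(-κ) ∫₀¹ ξ/√(1 - (1 - λκξ²(1-θ²)/2)⁻²) dθ`. -/
def Jmap (κ lam ξ : ℝ) : ℝ :=
  Real.sqrt (-κ) *
    ∫ θ in (0 : ℝ)..1,
      ξ / Real.sqrt (1 - ((1 - lam * κ / 2 * ξ ^ 2 * (1 - θ ^ 2))⁻¹) ^ 2)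


lemma gapLemma (κ lam : ℝ) (hκ : 0 < κ) (hlam : 0 < lam) (u : ℝ → ℝ)
    (hd1 : ∀ x ∈ Icc (0:ℝ) 1, DifferentiableAt ℝ u x)
    (hd2 : ∀ x ∈ Icc (0:ℝ) 1, DifferentiableAt ℝ (deriv u) x)
    (hode : ∀ x ∈ Icc (0:ℝ) 1,
      -(deriv (deriv u) x) = lam * u x * (1 + κ * (deriv u x) ^ 2) ^ ((3:ℝ)/2))
    (a b : ℝ) (ha : 0 ≤ a) (hb : b ≤ 1) (hab : a < b)
    (hua : u a = 0)
    (hpos : ∀ x ∈ Ioo a b, 0 < u x)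
    (hub : 0 ≤ u b) :
    b - a < π / Real.sqrt lam := by
  set s := Real.sqrt lam with hsdef
  have hs : 0 < s := Real.sqrt_pos.mpr hlam
  have hs2 : s ^ 2 = lam := Real.sq_sqrt hlam.le
  by_contra hcon
  push_neg at hcon
  set e := a + π / s with hedef
  have hpis : 0 < π / s := div_pos Real.pi_pos hs
  have hea : a < e := by rw [hedef]; linarith
  have heb : e ≤ b := by rw [hedef]; linarith
  have he1 : e ≤ 1 := heb.trans hb
  have hsea : s * (e - a) = π := by rw [hedef]; field_simp; ring
  have hsub : Icc a e ⊆ Icc 0 1 := fun x hx => ⟨ha.trans hx.1, hx.2.trans he1⟩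
  set W : ℝ → ℝ := fun y => u y * (s * Real.cos (s * (y - a))) -
      deriv u y * Real.sin (s * (y - a)) with hWdef
  have hW : ∀ x ∈ Icc a e, HasDerivAt W
      (lam * u x * Real.sin (s * (x - a)) *
        ((1 + κ * (deriv u x) ^ 2) ^ ((3:ℝ)/2) - 1)) x := by
    intro x hx
    have hx01 : x ∈ Icc (0:ℝ) 1 := hsub hx
    have hu : HasDerivAt u (deriv u x) x := (hd1 x hx01).hasDerivAt
    have hu' : HasDerivAt (deriv u) (deriv (deriv u) x) x := (hd2 x hx01).hasDerivAt
    have hlin : HasDerivAt (fun y : ℝ => s * (y - a)) s x := by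
      simpa using ((hasDerivAt_id x).sub_const a).const_mul s
    have hsin : HasDerivAt (fun y => Real.sin (s * (y - a)))
        (Real.cos (s * (x - a)) * s) x := by
      exact (Real.hasDerivAt_sin (s * (x - a))).comp x hlin
    have hcos : HasDerivAt (fun y => Real.cos (s * (y - a)))
        (-Real.sin (s * (x - a)) * s) x := by
      exact (Real.hasDerivAt_cos (s * (x - a))).comp x hlin
    have hW0 := (hu.mul (hcos.const_mul s)).sub (hu'.mul hsin)
    refine hW0.congr_deriv ?_
    have h2 : deriv (deriv u) x =
        -(lam * u x * (1 + κ * (deriv u x) ^ 2) ^ ((3:ℝ)/2)) := by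
      have := hode x hx01; linarith
    rw [h2, ← hs2]; ring
  have hA1 : ∀ t : ℝ, 1 ≤ (1 + κ * t ^ 2) ^ ((3:ℝ)/2) := by
    intro t
    calc (1:ℝ) = 1 ^ ((3:ℝ)/2) := (Real.one_rpow _).symm
    _ ≤ _ := Real.rpow_le_rpow zero_le_one (by nlinarith [sq_nonneg t]) (by norm_num)
  have hsinnn : ∀ x ∈ Icc a e, 0 ≤ Real.sin (s * (x - a)) := by
    intro x hx
    apply Real.sin_nonneg_of_nonneg_of_le_pi
    · have := hx.1
      have : (0:ℝ) ≤ x - a := by linarith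
      positivity
    · have hxe : x ≤ e := hx.2
      nlinarith
  have hupos : ∀ x ∈ Ioo a e, 0 < u x := fun x hx =>
    hpos x ⟨hx.1, hx.2.trans_le heb⟩
  have hWc : ContinuousOn W (Icc a e) := fun x hx =>
    ((hW x hx).continuousAt).continuousWithinAt
  have hmono : MonotoneOn W (Icc a e) := by
    apply monotoneOn_of_deriv_nonneg (convex_Icc a e) hWc
    · rw [interior_Icc]
      exact fun x hx =>
        ((hW x (Ioo_subset_Icc_self hx)).differentiableAt).differentiableWithinAt
    · intro x hx
      rw [interior_Icc] at hx
      rw [(hW x (Ioo_subset_Icc_self hx)).deriv]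
      have h1 : 0 ≤ u x := (hupos x hx).le
      have h2 : 0 ≤ Real.sin (s * (x - a)) := hsinnn x (Ioo_subset_Icc_self hx)
      have h3 : 0 ≤ (1 + κ * (deriv u x) ^ 2) ^ ((3:ℝ)/2) - 1 := by
        linarith [hA1 (deriv u x)]
      have := hlam.le
      positivity
  have haIcc : a ∈ Icc a e := ⟨le_refl a, hea.le⟩
  have heIcc : e ∈ Icc a e := ⟨hea.le, le_refl e⟩
  have hWa : W a = 0 := by rw [hWdef]; simp [hua]
  have hWe : W e = -(s * u e) := by
    rw [hWdef]; simp only [hsea, Real.cos_pi, Real.sin_pi]; ring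
  have hue : 0 ≤ u e := by
    rcases lt_or_eq_of_le heb with h | h
    · exact (hpos e ⟨hea, h⟩).le
    · rw [h]; exact hub
  have hWae : W a ≤ W e := hmono haIcc heIcc hea.le
  have hWe0 : W e = 0 := by
    rw [hWe]; rw [hWa] at hWae; rw [hWe] at hWae; nlinarith
  have hWzero : ∀ x ∈ Icc a e, W x = 0 := by
    intro x hx
    have h1 : W a ≤ W x := hmono haIcc hx hx.1
    have h2 : W x ≤ W e := hmono hx heIcc hx.2
    rw [hWa] at h1; rw [hWe0] at h2; linarith
  have hderiv0 : ∀ x ∈ Ioo a e, deriv u x = 0 := by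
    intro x hx
    have hev : W =ᶠ[nhds x] fun _ => (0:ℝ) :=
      Filter.eventuallyEq_of_mem (Ioo_mem_nhds hx.1 hx.2)
        (fun y hy => hWzero y (Ioo_subset_Icc_self hy))
    have hd0 : deriv W x = 0 := by rw [hev.deriv_eq]; simp
    have heq := (hW x (Ioo_subset_Icc_self hx)).deriv
    rw [hd0] at heq
    have hux : 0 < u x := hupos x hx
    have hsinp : 0 < Real.sin (s * (x - a)) := by
      apply Real.sin_pos_of_pos_of_lt_pi
      · have : 0 < x - a := by linarith [hx.1]
        positivity
      · nlinarith [hx.2]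
    by_contra hne
    have hbase : (1:ℝ) < 1 + κ * (deriv u x) ^ 2 := by
      have : 0 < (deriv u x) ^ 2 := by positivity
      nlinarith
    have hgt : 1 < (1 + κ * (deriv u x) ^ 2) ^ ((3:ℝ)/2) := by
      rw [Real.one_lt_rpow_iff_of_pos (by linarith)]
      exact Or.inl ⟨hbase, by norm_num⟩
    have hp : 0 < lam * u x * Real.sin (s * (x - a)) *
        ((1 + κ * (deriv u x) ^ 2) ^ ((3:ℝ)/2) - 1) :=
      mul_pos (mul_pos (mul_pos hlam hux) hsinp) (by linarith)
    linarith
  -- MVT contradiction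
  set m := (a + e) / 2 with hmdef
  have ham : a < m := by rw [hmdef]; linarith
  have hme : m < e := by rw [hmdef]; linarith
  have hcont : ContinuousOn u (Icc a m) := fun y hy =>
    ((hd1 y (hsub ⟨hy.1, hy.2.trans hme.le⟩)).continuousAt).continuousWithinAt
  have hdiff : DifferentiableOn ℝ u (Ioo a m) := fun y hy =>
    (hd1 y (hsub ⟨hy.1.le, (hy.2.trans hme).le⟩)).differentiableWithinAt
  obtain ⟨c, hc, hceq⟩ := exists_deriv_eq_slope u ham hcont hdiff
  have hc0 : deriv u c = 0 := hderiv0 c ⟨hc.1, hc.2.trans hme⟩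
  have hum : 0 < u m := hupos m ⟨ham, hme⟩
  have hma : m - a ≠ 0 := by linarith
  rw [hc0, hua] at hceq
  rw [eq_div_iff hma] at hceq
  linarith

lemma signConst (u : ℝ → ℝ) (a b : ℝ) (hab : a < b)
    (hc : ContinuousOn u (Icc a b))
    (hnz : ∀ z ∈ Ioo a b, u z ≠ 0) (m : ℝ) (hm : m ∈ Ioo a b) (hum : 0 < u m) :
    ∀ z ∈ Ioo a b, 0 < u z := by
  intro z hz
  rcases lt_trichotomy (u z) 0 with hneg | h0 | hposz
  · exfalso
    rcases lt_trichotomy z m with hzm | hzm | hzm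
    · have hcont : ContinuousOn u (Icc z m) :=
        hc.mono (Icc_subset_Icc hz.1.le hm.2.le)
      have h0mem : (0:ℝ) ∈ Ioo (u z) (u m) := ⟨hneg, hum⟩
      obtain ⟨w, hw, hw0⟩ := intermediate_value_Ioo hzm.le hcont h0mem
      exact hnz w ⟨hz.1.trans hw.1, hw.2.trans hm.2⟩ hw0
    · rw [hzm] at hneg; linarith
    · have hcont : ContinuousOn u (Icc m z) :=
        hc.mono (Icc_subset_Icc hm.1.le hz.2.le)
      have h0mem : (0:ℝ) ∈ Ioo (u z) (u m) := ⟨hneg, hum⟩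
      obtain ⟨w, hw, hw0⟩ := intermediate_value_Ioo' hzm.le hcont h0mem
      exact hnz w ⟨hm.1.trans hw.1, hw.2.trans hz.2⟩ hw0
  · exact absurd h0 (hnz z hz)
  · exact hposz

theorem stmt2' (κ lam : ℝ) (hκ : 0 < κ) (hlam : 0 < lam) (n : ℕ) (hn : 1 ≤ n)
    (u : ℝ → ℝ)
    (hd1 : ∀ x ∈ Icc (0:ℝ) 1, DifferentiableAt ℝ u x)
    (hd2 : ∀ x ∈ Icc (0:ℝ) 1, DifferentiableAt ℝ (deriv u) x)
    (hode : ∀ x ∈ Icc (0:ℝ) 1,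
      -(deriv (deriv u) x) = lam * u x * (1 + κ * (deriv u x) ^ 2) ^ ((3:ℝ)/2))
    (hu0 : u 0 = 0) (hu1 : u 1 = 0)
    (hcount : {x ∈ Ioo (0:ℝ) 1 | u x = 0}.ncard = n - 1)
    (hsimple : ∀ τ ∈ Icc (0:ℝ) 1, u τ = 0 → deriv u τ ≠ 0) :
    lam < (n : ℝ) ^ 2 * π ^ 2 := by
  set Z := {x ∈ Icc (0:ℝ) 1 | u x = 0} with hZdef
  have hZsub : Z ⊆ Icc 0 1 := fun x hx => hx.1
  -- finiteness of Z
  have hfin : Z.Finite := by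
    by_contra hinf
    obtain ⟨z, hzK, hacc⟩ :=
      (show Z.Infinite from hinf).exists_accPt_of_subset_isCompact isCompact_Icc hZsub
    have hne : (nhdsWithin z (Z \ {z})).NeBot :=
      accPt_principal_iff_nhdsWithin.mp hacc
    have hsubne : Z \ {z} ⊆ {z}ᶜ := fun y hy => hy.2
    have huz : u z = 0 := by
      have h1 : Tendsto u (nhdsWithin z (Z \ {z})) (nhds (u z)) :=
        ((hd1 z hzK).continuousAt.tendsto).mono_left nhdsWithin_le_nhds
      have h2 : Tendsto u (nhdsWithin z (Z \ {z})) (nhds 0) := by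
        apply Tendsto.congr' _ tendsto_const_nhds
        filter_upwards [eventually_mem_nhdsWithin] with y hy
        exact (hy.1.2).symm
      exact tendsto_nhds_unique h1 h2
    have hdz : deriv u z = 0 := by
      have h1 : Tendsto (slope u z) (nhdsWithin z (Z \ {z})) (nhds (deriv u z)) := by
        have := hasDerivAt_iff_tendsto_slope.mp (hd1 z hzK).hasDerivAt
        exact this.mono_left (nhdsWithin_mono z hsubne)
      have h2 : Tendsto (slope u z) (nhdsWithin z (Z \ {z})) (nhds 0) := by
        apply Tendsto.congr' _ tendsto_const_nhds
        filter_upwards [eventually_mem_nhdsWithin] with y hy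
        rw [slope_def_field, hy.1.2, huz]
        simp
      exact tendsto_nhds_unique h1 h2
    exact hsimple z hzK huz hdz
  set Zi := {x ∈ Ioo (0:ℝ) 1 | u x = 0} with hZidef
  have hZisub : Zi ⊆ Z := fun x hx => ⟨Ioo_subset_Icc_self hx.1, hx.2⟩
  have hfinZi : Zi.Finite := hfin.subset hZisub
  have h0Z : (0:ℝ) ∈ Z := ⟨left_mem_Icc.mpr zero_le_one, hu0⟩
  have h1Z : (1:ℝ) ∈ Z := ⟨right_mem_Icc.mpr zero_le_one, hu1⟩
  have hZeq : Z = insert (0:ℝ) (insert 1 Zi) := by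
    ext x
    constructor
    · rintro ⟨hx, hux⟩
      rcases eq_or_lt_of_le hx.1 with h0 | h0
      · exact Or.inl h0.symm
      rcases eq_or_lt_of_le hx.2 with h1 | h1
      · exact Or.inr (Or.inl h1)
      · exact Or.inr (Or.inr ⟨⟨h0, h1⟩, hux⟩)
    · rintro (rfl | rfl | hx)
      · exact h0Z
      · exact h1Z
      · exact hZisub hx
  have h1ni : (1:ℝ) ∉ Zi := fun h => lt_irrefl (1:ℝ) h.1.2
  have h0ni : (0:ℝ) ∉ insert (1:ℝ) Zi := by
    intro h
    rcases h with h | h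
    · norm_num at h
    · exact lt_irrefl (0:ℝ) h.1.1
  have hcardZ : Z.ncard = n + 1 := by
    rw [hZeq, Set.ncard_insert_of_notMem h0ni (hfinZi.insert 1),
      Set.ncard_insert_of_notMem h1ni hfinZi, hcount]
    omega
  set F := hfin.toFinset with hFdef
  have hFcard : F.card = n + 1 := by
    rw [← Set.ncard_eq_toFinset_card Z hfin, hcardZ]
  set x : Fin (n + 1) ↪o ℝ := F.orderEmbOfFin hFcard with hxdef
  have hmem : ∀ i, x i ∈ Z := fun i =>
    hfin.mem_toFinset.mp (F.orderEmbOfFin_mem hFcard i)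
  have hsurj : ∀ z ∈ Z, ∃ i, x i = z := by
    intro z hz
    have : z ∈ Set.range (x : Fin (n+1) → ℝ) := by
      rw [hxdef]
      rw [Finset.range_orderEmbOfFin]
      exact hfin.mem_toFinset.mpr hz
    exact this
  have hstrict : StrictMono (x : Fin (n+1) → ℝ) := (F.orderEmbOfFin hFcard).strictMono
  have hx0 : x 0 = 0 := by
    obtain ⟨i, hi⟩ := hsurj 0 h0Z
    have h1 : x 0 ≤ x i := hstrict.monotone (Fin.zero_le i)
    rw [hi] at h1
    exact le_antisymm h1 (hmem 0).1.1
  have hxl : x (Fin.last n) = 1 := by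
    obtain ⟨i, hi⟩ := hsurj 1 h1Z
    have h1 : x i ≤ x (Fin.last n) := hstrict.monotone (Fin.le_last i)
    rw [hi] at h1
    exact le_antisymm (hmem (Fin.last n)).1.2 h1
  have hx0le : ∀ i, 0 ≤ x i := by
    intro i
    rw [← hx0]
    exact hstrict.monotone (Fin.zero_le i)
  have hxle1 : ∀ i, x i ≤ 1 := by
    intro i
    rw [← hxl]
    exact hstrict.monotone (Fin.le_last i)
  -- gap bounds
  have hgap : ∀ k : ℕ, ∀ hk : k < n,
      x ⟨k + 1, by omega⟩ - x ⟨k, by omega⟩ < π / Real.sqrt lam := by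
    intro k hk
    set a := x ⟨k, by omega⟩ with hadef
    set b := x ⟨k + 1, by omega⟩ with hbdef
    have hab : a < b := hstrict (by simp [Fin.mk_lt_mk])
    have ha0 : 0 ≤ a := hx0le _
    have hb1 : b ≤ 1 := hxle1 _
    have hua : u a = 0 := (hmem _).2
    have hub : u b = 0 := (hmem _).2
    have hnz : ∀ z ∈ Ioo a b, u z ≠ 0 := by
      intro z hz huz
      have hzZ : z ∈ Z := ⟨⟨ha0.trans hz.1.le, hz.2.le.trans hb1⟩, huz⟩
      obtain ⟨j, hj⟩ := hsurj z hzZ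
      have hl : (⟨k, by omega⟩ : Fin (n+1)) < j := by
        apply hstrict.lt_iff_lt.mp
        rw [hj]; exact hz.1
      have hr : j < (⟨k + 1, by omega⟩ : Fin (n+1)) := by
        apply hstrict.lt_iff_lt.mp
        rw [hj]; exact hz.2
      rw [Fin.lt_def] at hl hr
      simp at hl hr
      omega
    have hcu : ContinuousOn u (Icc a b) := fun y hy =>
      ((hd1 y ⟨ha0.trans hy.1, hy.2.trans hb1⟩).continuousAt).continuousWithinAt
    set m := (a + b) / 2 with hmdef
    have hm : m ∈ Ioo a b := ⟨by rw [hmdef]; linarith, by rw [hmdef]; linarith⟩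
    rcases lt_or_gt_of_ne (hnz m hm) with hneg | hposm
    · -- u < 0 on (a,b): apply gapLemma to -u
      have humpos : 0 < (-u) m := by simpa using hneg
      have hcu' : ContinuousOn (-u) (Icc a b) := hcu.neg
      have hnz' : ∀ z ∈ Ioo a b, (-u) z ≠ 0 := by
        intro z hz h
        exact hnz z hz (by simpa using h)
      have hposall := signConst (-u) a b hab hcu' hnz' m hm humpos
      have hder_neg : deriv (fun t => -u t) = fun t => -(deriv u t) :=
        funext fun t => deriv.neg
      have hd1' : ∀ y ∈ Icc (0:ℝ) 1, DifferentiableAt ℝ (fun t => -u t) y :=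
        fun y hy => (hd1 y hy).neg
      have hd2' : ∀ y ∈ Icc (0:ℝ) 1, DifferentiableAt ℝ (deriv (fun t => -u t)) y := by
        rw [hder_neg]
        exact fun y hy => (hd2 y hy).neg
      have hode' : ∀ y ∈ Icc (0:ℝ) 1,
          -(deriv (deriv (fun t => -u t)) y) =
            lam * (fun t => -u t) y *
              (1 + κ * (deriv (fun t => -u t) y) ^ 2) ^ ((3:ℝ)/2) := by
        intro y hy
        rw [hder_neg]
        have hdd : deriv (fun t => -deriv u t) y = -(deriv (deriv u) y) := deriv.neg
        rw [hdd]
        simp only [neg_sq, neg_neg]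
        have := hode y hy
        linarith
      have := gapLemma κ lam hκ hlam (fun t => -u t) hd1' hd2' hode' a b ha0 hb1 hab
        (by simpa using hua)
        (fun z hz => hposall z hz)
        (by simp [hub])
      exact this
    · have hposall := signConst u a b hab hcu hnz m hm hposm
      exact gapLemma κ lam hκ hlam u hd1 hd2 hode a b ha0 hb1 hab hua hposall (le_of_eq hub.symm)
  -- telescoping sum
  set f : ℕ → ℝ := fun k => if h : k < n + 1 then x ⟨k, h⟩ else 1 with hfdef
  have hkey : ∀ k ∈ Finset.range n, f (k + 1) - f k < π / Real.sqrt lam := by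
    intro k hk
    rw [Finset.mem_range] at hk
    have h1 : k + 1 < n + 1 := by omega
    have h2 : k < n + 1 := by omega
    rw [hfdef]
    simp only [dif_pos h1, dif_pos h2]
    exact hgap k hk
  have htele : ∑ k ∈ Finset.range n, (f (k + 1) - f k) = f n - f 0 :=
    Finset.sum_range_sub f n
  have hfn : f n = 1 := by
    rw [hfdef]
    simp only [dif_pos (Nat.lt_succ_self n)]
    exact hxl
  have hf0 : f 0 = 0 := by
    rw [hfdef]
    simp only [dif_pos (Nat.succ_pos n)]
    exact hx0
  have hnonempty : (Finset.range n).Nonempty := Finset.nonempty_range_iff.mpr (by omega)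
  have hsum : ∑ k ∈ Finset.range n, (f (k + 1) - f k) <
      ∑ _k ∈ Finset.range n, π / Real.sqrt lam :=
    Finset.sum_lt_sum_of_nonempty hnonempty hkey
  rw [htele, hfn, hf0, Finset.sum_const, Finset.card_range, nsmul_eq_mul] at hsum
  have hs : 0 < Real.sqrt lam := Real.sqrt_pos.mpr hlam
  have hnd : (1:ℝ) - 0 < (n : ℝ) * π / Real.sqrt lam := by
    rw [mul_div_assoc]; exact hsum
  have hlt : Real.sqrt lam < (n : ℝ) * π := by
    rw [lt_div_iff₀ hs] at hnd
    linarith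
  have hsq : lam = Real.sqrt lam * Real.sqrt lam := (Real.mul_self_sqrt hlam.le).symm
  nlinarith [Real.sqrt_nonneg lam, Real.pi_pos]

theorem stmt2 (κ lam : ℝ) (hκ : 0 < κ) (hlam : 0 < lam) (n : ℕ) (hn : 1 ≤ n)
    (u : ℝ → ℝ) (hu : SPlus κ lam n u) :
    lam < (n : ℝ) ^ 2 * Real.pi ^ 2 := by
  obtain ⟨⟨⟨hd1, hd2, _, _, hode⟩, hu0, hu1⟩, _, hcount, hsimple, _⟩ := hu
  exact stmt2' κ lam hκ hlam n hn u hd1 hd2 hode hu0 hu1 hcount hsimple
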